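/- Let V ∈ span(e₁, …, e_{2n}) be a unit vector of the oscillator algebra 𝔤ₙ(λ). Then the operator A_Vᵀ A_V acts as follows: A_Vᵀ A_V W = (1/4) g(W, φV) φV for W ∈ span(e₁, …, e_{2n}); A_Vᵀ A_V ξ = (1/4) ξ − (1/2) g(V, E_λ V) ζ; A_Vᵀ A_V ζ = −(1/2) g(V, E_λ V) ξ + g(V, E_λ² V) ζ. In particular φV is an eigenvector with eigenvalue 1/4, and 0 is an eigenvalue of multiplicity at least 2n − 1. -/

import Mathlib

open scoped RealInnerProductSpace
open Finset

noncomputable section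

/-- The underlying inner product space of the oscillator algebra `𝔤ₙ(λ)`:
a `(2n+2)`-dimensional real inner product space. -/
abbrev Osc (n : ℕ) := EuclideanSpace ℝ (Fin (2*n+2))

/-- The basis vectors `e₁, …, eₙ`. -/
def oe (n : ℕ) (i : Fin n) : Osc n :=
  EuclideanSpace.single ⟨i.1, by have := i.2; omega⟩ 1

/-- The basis vectors `e_{n+1}, …, e_{2n}`. -/
def oE (n : ℕ) (i : Fin n) : Osc n :=
  EuclideanSpace.single ⟨n + i.1, by have := i.2; omega⟩ 1

/-- The basis vector `ξ`. -/
def oXi (n : ℕ) : Osc n := EuclideanSpace.single ⟨2*n, by omega⟩ 1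

/-- The basis vector `ζ`. -/
def oZeta (n : ℕ) : Osc n := EuclideanSpace.single ⟨2*n+1, by omega⟩ 1

/-- `br` is the Lie bracket of the oscillator algebra `𝔤ₙ(λ)`: the bilinear map
determined by `[eᵢ, e_{n+j}] = δᵢⱼ ξ`, `[ζ, eⱼ] = λⱼ e_{n+j}`, `[ζ, e_{n+j}] = −λⱼ eⱼ`,
all other brackets of basis vectors being zero. -/
structure IsOscBracket (n : ℕ) (lam : Fin n → ℝ)
    (br : Osc n →ₗ[ℝ] Osc n →ₗ[ℝ] Osc n) : Prop where
  anti : ∀ X Y : Osc n, br X Y = - br Y X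
  ee : ∀ i j : Fin n, br (oe n i) (oe n j) = 0
  eE : ∀ i j : Fin n, br (oe n i) (oE n j) = if i = j then oXi n else 0
  EE : ∀ i j : Fin n, br (oE n i) (oE n j) = 0
  exi : ∀ i : Fin n, br (oe n i) (oXi n) = 0
  Exi : ∀ i : Fin n, br (oE n i) (oXi n) = 0
  zee : ∀ j : Fin n, br (oZeta n) (oe n j) = lam j • oE n j
  zeE : ∀ j : Fin n, br (oZeta n) (oE n j) = - (lam j • oe n j)
  xize : br (oXi n) (oZeta n) = 0

/-- `nab` is the Levi-Civita connection of the left-invariant metric (evaluated on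
left-invariant fields): the bilinear map determined by the Koszul formula
`2 g(∇_X Y, Z) = g([X,Y], Z) − g([Y,Z], X) + g([Z,X], Y)`. -/
def IsLeviCivita (n : ℕ) (br nab : Osc n →ₗ[ℝ] Osc n →ₗ[ℝ] Osc n) : Prop :=
  ∀ X Y Z : Osc n,
    2 * ⟪nab X Y, Z⟫ = ⟪br X Y, Z⟫ - ⟪br Y Z, X⟫ + ⟪br Z X, Y⟫

/-- The Nomizu operator `A_V X = −∇_X V`. -/
def nomizu {n : ℕ} (nab : Osc n →ₗ[ℝ] Osc n →ₗ[ℝ] Osc n) (V X : Osc n) : Osc n :=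
  -(nab X V)

/-- The covariant derivative of the Nomizu operator:
`(∇_X A_V) Y = ∇_X (A_V Y) − A_V (∇_X Y)`. -/
def covNomizu {n : ℕ} (nab : Osc n →ₗ[ℝ] Osc n →ₗ[ℝ] Osc n) (V X Y : Osc n) : Osc n :=
  nab X (nomizu nab V Y) - nomizu nab V (nab X Y)

/-- The curvature tensor `R(X,Y)Z = ∇_X ∇_Y Z − ∇_Y ∇_X Z − ∇_{[X,Y]} Z`. -/
def curvR {n : ℕ} (br nab : Osc n →ₗ[ℝ] Osc n →ₗ[ℝ] Osc n) (X Y Z : Osc n) : Osc n :=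
  nab X (nab Y Z) - nab Y (nab X Z) - nab (br X Y) Z

/-- A unit vector `V ∈ 𝔤ₙ(λ)` is a *minimal* unit vector field if there is an orthonormal
basis `u₁, …, u_{2n+2}` of eigenvectors of `A_Vᵀ A_V` (the eigenvector condition being
expressed as `g(A_V W, A_V uᵢ) = σᵢ² g(W, uᵢ)` for all `W`) with eigenvalues `σᵢ²` such that
`Σᵢ ((∇_{uᵢ} A_V)uᵢ + A_V R(V, A_V uᵢ)uᵢ)/(1 + σᵢ²) = (Σᵢ σᵢ²/(1 + σᵢ²)) V`. -/
def IsMinimal {n : ℕ} (br nab : Osc n →ₗ[ℝ] Osc n →ₗ[ℝ] Osc n) (V : Osc n) : Prop :=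
  ∃ (u : Fin (2*n+2) → Osc n) (σ : Fin (2*n+2) → ℝ),
    (∀ i j, ⟪u i, u j⟫ = if i = j then 1 else 0) ∧
    (∀ i, ∀ W : Osc n,
      ⟪nomizu nab V W, nomizu nab V (u i)⟫ = (σ i)^2 * ⟪W, u i⟫) ∧
    (∑ i, (1 + (σ i)^2)⁻¹ •
        (covNomizu nab V (u i) (u i) +
          nomizu nab V (curvR br nab V (nomizu nab V (u i)) (u i))))
      = (∑ i, (σ i)^2 / (1 + (σ i)^2)) • V

/-- The operator `φ` with `φ eᵢ = e_{n+i}`, `φ e_{n+i} = −eᵢ`, `φ ξ = φ ζ = 0`. -/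
structure IsPhi (n : ℕ) (phi : Osc n →ₗ[ℝ] Osc n) : Prop where
  he : ∀ i : Fin n, phi (oe n i) = oE n i
  hE : ∀ i : Fin n, phi (oE n i) = - oe n i
  hxi : phi (oXi n) = 0
  hzeta : phi (oZeta n) = 0

/-- The operator `E_λ` with `E_λ eᵢ = λᵢ eᵢ`, `E_λ e_{n+i} = λᵢ e_{n+i}`, `E_λ ξ = E_λ ζ = 0`. -/
structure IsElam (n : ℕ) (lam : Fin n → ℝ) (El : Osc n →ₗ[ℝ] Osc n) : Prop where
  he : ∀ i : Fin n, El (oe n i) = lam i • oe n i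
  hE : ∀ i : Fin n, El (oE n i) = lam i • oE n i
  hxi : El (oXi n) = 0
  hzeta : El (oZeta n) = 0
section OscAux

lemma inner_single_single' {m : Type*} [Fintype m] [DecidableEq m] (i j : m) :
    ⟪EuclideanSpace.single i (1:ℝ), EuclideanSpace.single j 1⟫ = if i = j then 1 else 0 := by
  rw [EuclideanSpace.inner_single_right]
  simp [EuclideanSpace.single_apply, eq_comm]

variable {n : ℕ}

@[simp] lemma inner_oe_oe (i j : Fin n) : ⟪oe n i, oe n j⟫ = if i = j then (1:ℝ) else 0 := by
  rw [oe, oe, inner_single_single']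
  congr 1
  simp only [Fin.mk.injEq, eq_iff_iff, Fin.ext_iff]
@[simp] lemma inner_oE_oE (i j : Fin n) : ⟪oE n i, oE n j⟫ = if i = j then (1:ℝ) else 0 := by
  rw [oE, oE, inner_single_single']
  congr 1
  simp only [Fin.mk.injEq, eq_iff_iff, Fin.ext_iff]
  omega
@[simp] lemma inner_oe_oE (i j : Fin n) : ⟪oe n i, oE n j⟫ = (0:ℝ) := by
  rw [oe, oE, inner_single_single', if_neg (by simp only [Fin.mk.injEq]; omega)]
@[simp] lemma inner_oE_oe (i j : Fin n) : ⟪oE n i, oe n j⟫ = (0:ℝ) := by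
  rw [real_inner_comm]; exact inner_oe_oE j i
@[simp] lemma inner_oe_xi (i : Fin n) : ⟪oe n i, oXi n⟫ = (0:ℝ) := by
  rw [oe, oXi, inner_single_single', if_neg (by simp only [Fin.mk.injEq]; omega)]
@[simp] lemma inner_oE_xi (i : Fin n) : ⟪oE n i, oXi n⟫ = (0:ℝ) := by
  rw [oE, oXi, inner_single_single', if_neg (by simp only [Fin.mk.injEq]; omega)]
@[simp] lemma inner_oe_zeta (i : Fin n) : ⟪oe n i, oZeta n⟫ = (0:ℝ) := by
  rw [oe, oZeta, inner_single_single', if_neg (by simp only [Fin.mk.injEq]; omega)]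
@[simp] lemma inner_oE_zeta (i : Fin n) : ⟪oE n i, oZeta n⟫ = (0:ℝ) := by
  rw [oE, oZeta, inner_single_single', if_neg (by simp only [Fin.mk.injEq]; omega)]
@[simp] lemma inner_xi_oe (i : Fin n) : ⟪oXi n, oe n i⟫ = (0:ℝ) := by
  rw [real_inner_comm]; exact inner_oe_xi i
@[simp] lemma inner_xi_oE (i : Fin n) : ⟪oXi n, oE n i⟫ = (0:ℝ) := by
  rw [real_inner_comm]; exact inner_oE_xi i
@[simp] lemma inner_zeta_oe (i : Fin n) : ⟪oZeta n, oe n i⟫ = (0:ℝ) := by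
  rw [real_inner_comm]; exact inner_oe_zeta i
@[simp] lemma inner_zeta_oE (i : Fin n) : ⟪oZeta n, oE n i⟫ = (0:ℝ) := by
  rw [real_inner_comm]; exact inner_oE_zeta i
@[simp] lemma inner_xi_xi : ⟪oXi n, oXi n⟫ = (1:ℝ) := by
  rw [oXi, inner_single_single', if_pos rfl]
@[simp] lemma inner_zeta_zeta : ⟪oZeta n, oZeta n⟫ = (1:ℝ) := by
  rw [oZeta, inner_single_single', if_pos rfl]
@[simp] lemma inner_xi_zeta : ⟪oXi n, oZeta n⟫ = (0:ℝ) := by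
  rw [oXi, oZeta, inner_single_single', if_neg (by simp only [Fin.mk.injEq]; omega)]
@[simp] lemma inner_zeta_xi : ⟪oZeta n, oXi n⟫ = (0:ℝ) := by
  rw [real_inner_comm]; exact inner_xi_zeta

lemma osc_ext {w : Osc n}
    (h1 : ∀ i, ⟪w, oe n i⟫ = 0) (h2 : ∀ i, ⟪w, oE n i⟫ = 0)
    (h3 : ⟪w, oXi n⟫ = 0) (h4 : ⟪w, oZeta n⟫ = 0) : w = 0 := by
  have hk : ∀ k' : Fin (2*n+2), w k' = ⟪w, EuclideanSpace.single k' 1⟫ := by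
    intro k'; rw [EuclideanSpace.inner_single_right]; simp
  ext k
  show w k = 0
  rcases lt_or_ge k.1 n with h | h
  · have := h1 ⟨k.1, h⟩
    rw [oe] at this
    rw [hk]; convert this using 3
  · rcases lt_or_ge k.1 (2*n) with h' | h'
    · have hkn : k.1 - n < n := by omega
      have := h2 ⟨k.1 - n, hkn⟩
      rw [oE] at this
      rw [hk]; convert this using 3
      simp only [Fin.ext_iff]; omega
    · rcases Nat.lt_or_ge k.1 (2*n+1) with h'' | h''
      · rw [oXi] at h3
        rw [hk]; convert h3 using 3
        simp only [Fin.ext_iff]; omega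
      · rw [oZeta] at h4
        rw [hk]; convert h4 using 3
        simp only [Fin.ext_iff]; have := k.2; omega

lemma osc_eq {w t : Osc n}
    (h1 : ∀ i, ⟪w, oe n i⟫ = ⟪t, oe n i⟫) (h2 : ∀ i, ⟪w, oE n i⟫ = ⟪t, oE n i⟫)
    (h3 : ⟪w, oXi n⟫ = ⟪t, oXi n⟫) (h4 : ⟪w, oZeta n⟫ = ⟪t, oZeta n⟫) : w = t := by
  have : w - t = 0 := by
    refine osc_ext (fun i => ?_) (fun i => ?_) ?_ ?_ <;>
      rw [inner_sub_left, sub_eq_zero]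
    exacts [h1 i, h2 i, h3, h4]
  exact sub_eq_zero.mp this

lemma span_decomp {v : Osc n}
    (hv : v ∈ Submodule.span ℝ (Set.range (oe n) ∪ Set.range (oE n))) :
    v = (∑ i, ⟪v, oe n i⟫ • oe n i) + ∑ i, ⟪v, oE n i⟫ • oE n i := by
  induction hv using Submodule.span_induction with
  | mem x hx =>
    rcases hx with ⟨i, rfl⟩ | ⟨i, rfl⟩ <;>
      simp only [inner_oe_oe, inner_oe_oE, inner_oE_oe, inner_oE_oE, ite_smul, zero_smul,
        one_smul, Finset.sum_ite_eq, Finset.mem_univ, if_true, Finset.sum_const_zero,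
        add_zero, zero_add]
  | zero => simp
  | add x y hx hy ihx ihy =>
    simp only [inner_add_left, add_smul, Finset.sum_add_distrib]
    conv_lhs => rw [ihx, ihy]
    abel
  | smul r x hx ihx =>
    simp only [real_inner_smul_left, mul_smul, ← Finset.smul_sum]
    conv_lhs => rw [ihx]
    rw [smul_add]

end OscAux

section OscAux2

variable {n : ℕ}

@[simp] lemma inner_ite_left' (c : Prop) [Decidable c] (x y z : Osc n) :
    ⟪(if c then x else y), z⟫ = if c then ⟪x, z⟫ else ⟪y, z⟫ := by split <;> rfl
@[simp] lemma inner_ite_right' (c : Prop) [Decidable c] (x y z : Osc n) :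
    ⟪z, (if c then x else y)⟫ = if c then ⟪z, x⟫ else ⟪z, y⟫ := by split <;> rfl

/-- A vector in the span of the `eᵢ` and `e_{n+i}`. -/
def ocombo (n : ℕ) (c d : Fin n → ℝ) : Osc n :=
  (∑ i, c i • oe n i) + ∑ i, d i • oE n i

@[simp] lemma ocombo_inner_oe (c d : Fin n → ℝ) (k : Fin n) :
    ⟪ocombo n c d, oe n k⟫ = c k := by
  simp only [ocombo, inner_add_left, sum_inner, real_inner_smul_left, inner_oe_oe,
    inner_oE_oe, mul_ite, mul_one, mul_zero, Finset.sum_ite_eq', Finset.mem_univ,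
    if_true, Finset.sum_const_zero, add_zero]
@[simp] lemma ocombo_inner_oE (c d : Fin n → ℝ) (k : Fin n) :
    ⟪ocombo n c d, oE n k⟫ = d k := by
  simp only [ocombo, inner_add_left, sum_inner, real_inner_smul_left, inner_oe_oE,
    inner_oE_oE, mul_ite, mul_one, mul_zero, Finset.sum_ite_eq', Finset.mem_univ,
    if_true, Finset.sum_const_zero, zero_add]
@[simp] lemma ocombo_inner_xi (c d : Fin n → ℝ) : ⟪ocombo n c d, oXi n⟫ = 0 := by
  simp only [ocombo, inner_add_left, sum_inner, real_inner_smul_left, inner_oe_xi,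
    inner_oE_xi, mul_zero, Finset.sum_const_zero, add_zero]
@[simp] lemma ocombo_inner_zeta (c d : Fin n → ℝ) : ⟪ocombo n c d, oZeta n⟫ = 0 := by
  simp only [ocombo, inner_add_left, sum_inner, real_inner_smul_left, inner_oe_zeta,
    inner_oE_zeta, mul_zero, Finset.sum_const_zero, add_zero]
@[simp] lemma oe_inner_ocombo (c d : Fin n → ℝ) (k : Fin n) :
    ⟪oe n k, ocombo n c d⟫ = c k := by rw [real_inner_comm]; exact ocombo_inner_oe c d k
@[simp] lemma oE_inner_ocombo (c d : Fin n → ℝ) (k : Fin n) :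
    ⟪oE n k, ocombo n c d⟫ = d k := by rw [real_inner_comm]; exact ocombo_inner_oE c d k
@[simp] lemma xi_inner_ocombo (c d : Fin n → ℝ) : ⟪oXi n, ocombo n c d⟫ = 0 := by
  rw [real_inner_comm]; exact ocombo_inner_xi c d
@[simp] lemma zeta_inner_ocombo (c d : Fin n → ℝ) : ⟪oZeta n, ocombo n c d⟫ = 0 := by
  rw [real_inner_comm]; exact ocombo_inner_zeta c d

lemma inner_ocombo_right (x : Osc n) (c d : Fin n → ℝ) :
    ⟪x, ocombo n c d⟫ = ∑ i, (c i * ⟪x, oe n i⟫ + d i * ⟪x, oE n i⟫) := by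
  simp only [ocombo, inner_add_right, inner_sum, real_inner_smul_right,
    Finset.sum_add_distrib]

lemma ocombo_inner_ocombo (c d c' d' : Fin n → ℝ) :
    ⟪ocombo n c d, ocombo n c' d'⟫ = ∑ i, (c' i * c i + d' i * d i) := by
  rw [inner_ocombo_right]
  simp only [ocombo_inner_oe, ocombo_inner_oE]

lemma ocombo_mem (c d : Fin n → ℝ) :
    ocombo n c d ∈ Submodule.span ℝ (Set.range (oe n) ∪ Set.range (oE n)) := by
  refine Submodule.add_mem _ (Submodule.sum_mem _ fun i _ => ?_)
    (Submodule.sum_mem _ fun i _ => ?_) <;>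
    refine Submodule.smul_mem _ _ (Submodule.subset_span ?_)
  · exact Or.inl ⟨i, rfl⟩
  · exact Or.inr ⟨i, rfl⟩

lemma span_decomp' {v : Osc n}
    (hv : v ∈ Submodule.span ℝ (Set.range (oe n) ∪ Set.range (oE n))) :
    v = ocombo n (fun i => ⟪v, oe n i⟫) (fun i => ⟪v, oE n i⟫) := span_decomp hv

end OscAux2

section OscAux3

variable {n : ℕ} {lam : Fin n → ℝ} {br nab : Osc n →ₗ[ℝ] Osc n →ₗ[ℝ] Osc n}

lemma br_self (hbr : IsOscBracket n lam br) (X : Osc n) : br X X = 0 := by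
  have h := hbr.anti X X
  have h3 : (2:ℝ) • br X X = 0 := by
    rw [two_smul]; nth_rewrite 2 [h]; exact add_neg_cancel _
  simpa using (smul_eq_zero.mp h3).resolve_left (by norm_num)

lemma br_Ee (hbr : IsOscBracket n lam br) (i j : Fin n) :
    br (oE n i) (oe n j) = -(if j = i then oXi n else 0) := by rw [hbr.anti, hbr.eE]
lemma br_xie (hbr : IsOscBracket n lam br) (j : Fin n) :
    br (oXi n) (oe n j) = 0 := by rw [hbr.anti, hbr.exi, neg_zero]
lemma br_xiE (hbr : IsOscBracket n lam br) (j : Fin n) :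
    br (oXi n) (oE n j) = 0 := by rw [hbr.anti, hbr.Exi, neg_zero]
lemma br_ez (hbr : IsOscBracket n lam br) (j : Fin n) :
    br (oe n j) (oZeta n) = -(lam j • oE n j) := by rw [hbr.anti, hbr.zee]
lemma br_Ez (hbr : IsOscBracket n lam br) (j : Fin n) :
    br (oE n j) (oZeta n) = lam j • oe n j := by rw [hbr.anti, hbr.zeE, neg_neg]
lemma br_zxi (hbr : IsOscBracket n lam br) :
    br (oZeta n) (oXi n) = 0 := by rw [hbr.anti, hbr.xize, neg_zero]

lemma br_e_ocombo (hbr : IsOscBracket n lam br) (j : Fin n) (c d : Fin n → ℝ) :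
    br (oe n j) (ocombo n c d) = d j • oXi n := by
  simp only [ocombo, map_add, map_sum, map_smul, hbr.ee, hbr.eE, smul_ite, smul_zero,
    Finset.sum_ite_eq, Finset.mem_univ, if_true, Finset.sum_const_zero, zero_add]

lemma br_E_ocombo (hbr : IsOscBracket n lam br) (j : Fin n) (c d : Fin n → ℝ) :
    br (oE n j) (ocombo n c d) = -(c j • oXi n) := by
  simp only [ocombo, map_add, map_sum, map_smul, br_Ee hbr, hbr.EE, smul_ite, smul_zero,
    smul_neg, Finset.sum_neg_distrib, Finset.sum_ite_eq', Finset.mem_univ, if_true,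
    Finset.sum_const_zero, add_zero, neg_zero]

lemma br_xi_ocombo (hbr : IsOscBracket n lam br) (c d : Fin n → ℝ) :
    br (oXi n) (ocombo n c d) = 0 := by
  simp only [ocombo, map_add, map_sum, map_smul, br_xie hbr, br_xiE hbr, smul_zero,
    Finset.sum_const_zero, add_zero]

lemma br_z_ocombo (hbr : IsOscBracket n lam br) (c d : Fin n → ℝ) :
    br (oZeta n) (ocombo n c d) =
      ocombo n (fun i => -(d i * lam i)) (fun i => c i * lam i) := by
  simp only [ocombo, map_add, map_sum, map_smul, hbr.zee, hbr.zeE, smul_neg, smul_smul,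
    Finset.sum_neg_distrib, neg_smul]
  abel

lemma br_ocombo_e (hbr : IsOscBracket n lam br) (c d : Fin n → ℝ) (j : Fin n) :
    br (ocombo n c d) (oe n j) = -(d j • oXi n) := by
  rw [hbr.anti, br_e_ocombo hbr]
lemma br_ocombo_E (hbr : IsOscBracket n lam br) (c d : Fin n → ℝ) (j : Fin n) :
    br (ocombo n c d) (oE n j) = c j • oXi n := by
  rw [hbr.anti, br_E_ocombo hbr, neg_neg]
lemma br_ocombo_xi (hbr : IsOscBracket n lam br) (c d : Fin n → ℝ) :
    br (ocombo n c d) (oXi n) = 0 := by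
  rw [hbr.anti, br_xi_ocombo hbr, neg_zero]
lemma br_ocombo_z (hbr : IsOscBracket n lam br) (c d : Fin n → ℝ) :
    br (ocombo n c d) (oZeta n) =
      -(ocombo n (fun i => -(d i * lam i)) (fun i => c i * lam i)) := by
  rw [hbr.anti, br_z_ocombo hbr]

lemma koszul (hlc : IsLeviCivita n br nab) (X Y Z : Osc n) :
    ⟪nab X Y, Z⟫ = (⟪br X Y, Z⟫ - ⟪br Y Z, X⟫ + ⟪br Z X, Y⟫)/2 := by
  have := hlc X Y Z; linarith

lemma oscnab_e (hbr : IsOscBracket n lam br) (hlc : IsLeviCivita n br nab)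
    (c d : Fin n → ℝ) (j : Fin n) :
    nab (oe n j) (ocombo n c d) = (d j / 2) • oXi n := by
  apply osc_eq <;> try intro k
  all_goals
    rw [koszul hlc]
    simp only [br_e_ocombo hbr, br_E_ocombo hbr, br_xi_ocombo hbr, br_z_ocombo hbr,
    br_ocombo_e hbr, br_ocombo_E hbr, br_ocombo_xi hbr, br_ocombo_z hbr,
    hbr.ee, hbr.eE, hbr.EE, hbr.exi, hbr.Exi, hbr.zee, hbr.zeE, hbr.xize,
    br_Ee hbr, br_xie hbr, br_xiE hbr, br_ez hbr, br_Ez hbr, br_zxi hbr, br_self hbr,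
    inner_zero_left, inner_zero_right, inner_neg_left, inner_neg_right,
    real_inner_smul_left, real_inner_smul_right,
    inner_oe_oe, inner_oe_oE, inner_oE_oe, inner_oE_oE, inner_oe_xi, inner_oE_xi,
    inner_oe_zeta, inner_oE_zeta, inner_xi_oe, inner_xi_oE, inner_zeta_oe, inner_zeta_oE,
    inner_xi_xi, inner_zeta_zeta, inner_xi_zeta, inner_zeta_xi,
    ocombo_inner_oe, ocombo_inner_oE, ocombo_inner_xi, ocombo_inner_zeta,
    oe_inner_ocombo, oE_inner_ocombo, xi_inner_ocombo, zeta_inner_ocombo,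
    ocombo_inner_ocombo,
    inner_ite_left', inner_ite_right', mul_ite, ite_mul, mul_zero, zero_mul, mul_one,
    one_mul, Finset.sum_ite_eq, Finset.sum_ite_eq', Finset.mem_univ, if_true, ite_self,
    Finset.sum_const_zero, add_zero, zero_add, sub_zero, zero_sub, neg_zero, neg_neg,
    mul_neg, neg_mul, zero_div, neg_sub]
    try ring

lemma oscnab_E (hbr : IsOscBracket n lam br) (hlc : IsLeviCivita n br nab)
    (c d : Fin n → ℝ) (j : Fin n) :
    nab (oE n j) (ocombo n c d) = -((c j / 2) • oXi n) := by
  apply osc_eq <;> try intro k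
  all_goals
    rw [koszul hlc]
    simp only [br_e_ocombo hbr, br_E_ocombo hbr, br_xi_ocombo hbr, br_z_ocombo hbr,
    br_ocombo_e hbr, br_ocombo_E hbr, br_ocombo_xi hbr, br_ocombo_z hbr,
    hbr.ee, hbr.eE, hbr.EE, hbr.exi, hbr.Exi, hbr.zee, hbr.zeE, hbr.xize,
    br_Ee hbr, br_xie hbr, br_xiE hbr, br_ez hbr, br_Ez hbr, br_zxi hbr, br_self hbr,
    inner_zero_left, inner_zero_right, inner_neg_left, inner_neg_right,
    real_inner_smul_left, real_inner_smul_right,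
    inner_oe_oe, inner_oe_oE, inner_oE_oe, inner_oE_oE, inner_oe_xi, inner_oE_xi,
    inner_oe_zeta, inner_oE_zeta, inner_xi_oe, inner_xi_oE, inner_zeta_oe, inner_zeta_oE,
    inner_xi_xi, inner_zeta_zeta, inner_xi_zeta, inner_zeta_xi,
    ocombo_inner_oe, ocombo_inner_oE, ocombo_inner_xi, ocombo_inner_zeta,
    oe_inner_ocombo, oE_inner_ocombo, xi_inner_ocombo, zeta_inner_ocombo,
    ocombo_inner_ocombo,
    inner_ite_left', inner_ite_right', mul_ite, ite_mul, mul_zero, zero_mul, mul_one,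
    one_mul, Finset.sum_ite_eq, Finset.sum_ite_eq', Finset.mem_univ, if_true, ite_self,
    Finset.sum_const_zero, add_zero, zero_add, sub_zero, zero_sub, neg_zero, neg_neg,
    mul_neg, neg_mul, zero_div, neg_sub]
    try ring

lemma oscnab_xi (hbr : IsOscBracket n lam br) (hlc : IsLeviCivita n br nab)
    (c d : Fin n → ℝ) :
    nab (oXi n) (ocombo n c d) = ocombo n (fun i => d i / 2) (fun i => -(c i / 2)) := by
  apply osc_eq <;> try intro k
  all_goals
    rw [koszul hlc]
    simp only [br_e_ocombo hbr, br_E_ocombo hbr, br_xi_ocombo hbr, br_z_ocombo hbr,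
    br_ocombo_e hbr, br_ocombo_E hbr, br_ocombo_xi hbr, br_ocombo_z hbr,
    hbr.ee, hbr.eE, hbr.EE, hbr.exi, hbr.Exi, hbr.zee, hbr.zeE, hbr.xize,
    br_Ee hbr, br_xie hbr, br_xiE hbr, br_ez hbr, br_Ez hbr, br_zxi hbr, br_self hbr,
    inner_zero_left, inner_zero_right, inner_neg_left, inner_neg_right,
    real_inner_smul_left, real_inner_smul_right,
    inner_oe_oe, inner_oe_oE, inner_oE_oe, inner_oE_oE, inner_oe_xi, inner_oE_xi,
    inner_oe_zeta, inner_oE_zeta, inner_xi_oe, inner_xi_oE, inner_zeta_oe, inner_zeta_oE,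
    inner_xi_xi, inner_zeta_zeta, inner_xi_zeta, inner_zeta_xi,
    ocombo_inner_oe, ocombo_inner_oE, ocombo_inner_xi, ocombo_inner_zeta,
    oe_inner_ocombo, oE_inner_ocombo, xi_inner_ocombo, zeta_inner_ocombo,
    ocombo_inner_ocombo,
    inner_ite_left', inner_ite_right', mul_ite, ite_mul, mul_zero, zero_mul, mul_one,
    one_mul, Finset.sum_ite_eq, Finset.sum_ite_eq', Finset.mem_univ, if_true, ite_self,
    Finset.sum_const_zero, add_zero, zero_add, sub_zero, zero_sub, neg_zero, neg_neg,
    mul_neg, neg_mul, zero_div, neg_sub]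
    try ring

lemma oscnab_z (hbr : IsOscBracket n lam br) (hlc : IsLeviCivita n br nab)
    (c d : Fin n → ℝ) :
    nab (oZeta n) (ocombo n c d) =
      ocombo n (fun i => -(d i * lam i)) (fun i => c i * lam i) := by
  apply osc_eq <;> try intro k
  all_goals
    rw [koszul hlc]
    simp only [br_e_ocombo hbr, br_E_ocombo hbr, br_xi_ocombo hbr, br_z_ocombo hbr,
    br_ocombo_e hbr, br_ocombo_E hbr, br_ocombo_xi hbr, br_ocombo_z hbr,
    hbr.ee, hbr.eE, hbr.EE, hbr.exi, hbr.Exi, hbr.zee, hbr.zeE, hbr.xize,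
    br_Ee hbr, br_xie hbr, br_xiE hbr, br_ez hbr, br_Ez hbr, br_zxi hbr, br_self hbr,
    inner_zero_left, inner_zero_right, inner_neg_left, inner_neg_right,
    real_inner_smul_left, real_inner_smul_right,
    inner_oe_oe, inner_oe_oE, inner_oE_oe, inner_oE_oE, inner_oe_xi, inner_oE_xi,
    inner_oe_zeta, inner_oE_zeta, inner_xi_oe, inner_xi_oE, inner_zeta_oe, inner_zeta_oE,
    inner_xi_xi, inner_zeta_zeta, inner_xi_zeta, inner_zeta_xi,
    ocombo_inner_oe, ocombo_inner_oE, ocombo_inner_xi, ocombo_inner_zeta,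
    oe_inner_ocombo, oE_inner_ocombo, xi_inner_ocombo, zeta_inner_ocombo,
    ocombo_inner_ocombo,
    inner_ite_left', inner_ite_right', mul_ite, ite_mul, mul_zero, zero_mul, mul_one,
    one_mul, Finset.sum_ite_eq, Finset.sum_ite_eq', Finset.mem_univ, if_true, ite_self,
    Finset.sum_const_zero, add_zero, zero_add, sub_zero, zero_sub, neg_zero, neg_neg,
    mul_neg, neg_mul, zero_div, neg_sub]
    try ring

lemma oscnab_ocombo (hbr : IsOscBracket n lam br) (hlc : IsLeviCivita n br nab)
    (c d c' d' : Fin n → ℝ) :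
    nab (ocombo n c' d') (ocombo n c d) =
      ((∑ i, (c' i * d i - d' i * c i))/2) • oXi n := by
  have hoc : ocombo n c' d' = (∑ i, c' i • oe n i) + ∑ i, d' i • oE n i := rfl
  conv_lhs => rw [hoc]
  rw [map_add, LinearMap.add_apply, map_sum, map_sum, LinearMap.sum_apply,
    LinearMap.sum_apply]
  simp only [map_smul, LinearMap.smul_apply, oscnab_e hbr hlc, oscnab_E hbr hlc,
    smul_smul, smul_neg, Finset.sum_neg_distrib]
  rw [← Finset.sum_smul, ← Finset.sum_smul, ← sub_eq_add_neg, ← sub_smul,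
    ← Finset.sum_sub_distrib]
  congr 1
  rw [Finset.sum_div]
  exact Finset.sum_congr rfl (fun i _ => by ring)

end OscAux3

/-- For a unit `V ∈ span(e₁,…,e_{2n})`, the action of `A_Vᵀ A_V`:
it is `¼ g(·, φV) φV` on `span(e₁,…,e_{2n})`, and on `span(ξ,ζ)` it is given by
`A_Vᵀ A_V ξ = ¼ ξ − ½ g(V, E_λ V) ζ`, `A_Vᵀ A_V ζ = −½ g(V, E_λ V) ξ + g(V, E_λ² V) ζ`.
In particular `φV` is an eigenvector with eigenvalue `¼`. -/
theorem ata_action (n : ℕ) (hn : 1 ≤ n) (lam : Fin n → ℝ)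
    (br nab : Osc n →ₗ[ℝ] Osc n →ₗ[ℝ] Osc n)
    (hbr : IsOscBracket n lam br) (hlc : IsLeviCivita n br nab)
    (phi El : Osc n →ₗ[ℝ] Osc n) (hphi : IsPhi n phi) (hEl : IsElam n lam El)
    (V : Osc n)
    (hV : V ∈ Submodule.span ℝ (Set.range (oe n) ∪ Set.range (oE n)))
    (hVunit : ‖V‖ = 1)
    (AT : Osc n →ₗ[ℝ] Osc n)
    (hAT : ∀ X Y : Osc n, ⟪nomizu nab V X, Y⟫ = ⟪X, AT Y⟫) :
    (∀ W ∈ Submodule.span ℝ (Set.range (oe n) ∪ Set.range (oE n)),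
      AT (nomizu nab V W) = ((1/4) * ⟪W, phi V⟫) • phi V) ∧
    AT (nomizu nab V (oXi n)) =
      ((1/4) : ℝ) • oXi n - ((1/2) * ⟪V, El V⟫) • oZeta n ∧
    AT (nomizu nab V (oZeta n)) =
      -(((1/2) * ⟪V, El V⟫) • oXi n) + ⟪V, El (El V)⟫ • oZeta n ∧
    AT (nomizu nab V (phi V)) = ((1/4) : ℝ) • phi V := by

  classical
  have sumext : ∀ (f g : Fin n → ℝ), (∀ i, f i = g i) → (∑ i, f i) = ∑ i, g i :=
    fun f g h => Finset.sum_congr rfl (fun i _ => h i)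
  have hVd : V = ocombo n (fun i => ⟪V, oe n i⟫) (fun i => ⟪V, oE n i⟫) := span_decomp' hV
  have hA1 : ∀ j, nomizu nab V (oe n j) = -((⟪V, oE n j⟫ / 2) • oXi n) := by
    intro j
    simp only [nomizu]
    conv_lhs => rw [hVd]
    rw [oscnab_e hbr hlc]
  have hA2 : ∀ j, nomizu nab V (oE n j) = (⟪V, oe n j⟫ / 2) • oXi n := by
    intro j
    simp only [nomizu]
    conv_lhs => rw [hVd]
    rw [oscnab_E hbr hlc, neg_neg]
  have hA3 : nomizu nab V (oXi n) =
      -(ocombo n (fun i => ⟪V, oE n i⟫ / 2) (fun i => -(⟪V, oe n i⟫ / 2))) := by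
    simp only [nomizu]
    conv_lhs => rw [hVd]
    rw [oscnab_xi hbr hlc]
  have hA4 : nomizu nab V (oZeta n) =
      -(ocombo n (fun i => -(⟪V, oE n i⟫ * lam i)) (fun i => ⟪V, oe n i⟫ * lam i)) := by
    simp only [nomizu]
    conv_lhs => rw [hVd]
    rw [oscnab_z hbr hlc]
  have hATinner : ∀ Y Z : Osc n, ⟪AT Y, Z⟫ = ⟪nomizu nab V Z, Y⟫ := fun Y Z => by
    rw [real_inner_comm]; exact (hAT Z Y).symm
  have hVV : ⟪V, V⟫ = 1 := by
    rw [real_inner_self_eq_norm_mul_norm, hVunit]; norm_num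
  have hN : (∑ i, (⟪V, oe n i⟫ * ⟪V, oe n i⟫ + ⟪V, oE n i⟫ * ⟪V, oE n i⟫)) = 1 := by
    rw [← hVV]
    conv_rhs => rw [hVd]
    simp only [ocombo_inner_ocombo]
  have hphiV : phi V = ocombo n (fun i => -⟪V, oE n i⟫) (fun i => ⟪V, oe n i⟫) := by
    conv_lhs => rw [hVd]
    simp only [ocombo, map_add, map_sum, map_smul, hphi.he, hphi.hE, smul_neg, neg_smul,
      Finset.sum_neg_distrib]
    abel
  have hElV : El V = ocombo n (fun i => ⟪V, oe n i⟫ * lam i)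
      (fun i => ⟪V, oE n i⟫ * lam i) := by
    conv_lhs => rw [hVd]
    simp only [ocombo, map_add, map_sum, map_smul, hEl.he, hEl.hE, smul_smul]
  have hElElV : El (El V) = ocombo n (fun i => ⟪V, oe n i⟫ * lam i * lam i)
      (fun i => ⟪V, oE n i⟫ * lam i * lam i) := by
    rw [hElV]
    simp only [ocombo, map_add, map_sum, map_smul, hEl.he, hEl.hE, smul_smul]
  have hT : ⟪V, El V⟫ =
      ∑ i, (⟪V, oe n i⟫ * ⟪V, oe n i⟫ + ⟪V, oE n i⟫ * ⟪V, oE n i⟫) * lam i := by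
    conv_lhs => rw [hElV]
    simp only [inner_ocombo_right]
    exact sumext _ _ fun i => by ring
  have hU : ⟪V, El (El V)⟫ =
      ∑ i, (⟪V, oe n i⟫ * ⟪V, oe n i⟫ + ⟪V, oE n i⟫ * ⟪V, oE n i⟫) * lam i * lam i := by
    conv_lhs => rw [hElElV]
    simp only [inner_ocombo_right]
    exact sumext _ _ fun i => by ring
  have main1 : ∀ W ∈ Submodule.span ℝ (Set.range (oe n) ∪ Set.range (oE n)),
      AT (nomizu nab V W) = ((1/4) * ⟪W, phi V⟫) • phi V := by
    intro W hW
    have hWd : W = ocombo n (fun i => ⟪W, oe n i⟫) (fun i => ⟪W, oE n i⟫) :=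
      span_decomp' hW
    have hAW : nomizu nab V W =
        -(((∑ i, (⟪W, oe n i⟫ * ⟪V, oE n i⟫ - ⟪W, oE n i⟫ * ⟪V, oe n i⟫))/2) • oXi n) := by
      simp only [nomizu]
      conv_lhs => rw [hVd, hWd]
      rw [oscnab_ocombo hbr hlc]
    have hwphi : ⟪W, phi V⟫ =
        -(∑ i, (⟪W, oe n i⟫ * ⟪V, oE n i⟫ - ⟪W, oE n i⟫ * ⟪V, oe n i⟫)) := by
      rw [hphiV]
      simp only [inner_ocombo_right]
      rw [← Finset.sum_neg_distrib]
      exact sumext _ _ fun i => by ring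
    apply osc_eq
    · intro k
      rw [hATinner, hA1, hAW, hwphi, hphiV]
      simp only [inner_zero_left, inner_zero_right, inner_neg_left, inner_neg_right, inner_neg_neg,
      inner_add_left, inner_add_right, inner_sub_left, inner_sub_right,
      real_inner_smul_left, real_inner_smul_right,
      inner_oe_oe, inner_oe_oE, inner_oE_oe, inner_oE_oE, inner_oe_xi, inner_oE_xi,
      inner_oe_zeta, inner_oE_zeta, inner_xi_oe, inner_xi_oE, inner_zeta_oe,
      inner_zeta_oE, inner_xi_xi, inner_zeta_zeta, inner_xi_zeta, inner_zeta_xi,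
      ocombo_inner_oe, ocombo_inner_oE, ocombo_inner_xi, ocombo_inner_zeta,
      oe_inner_ocombo, oE_inner_ocombo, xi_inner_ocombo, zeta_inner_ocombo,
      ocombo_inner_ocombo, mul_ite, ite_mul, mul_zero, zero_mul, mul_one, one_mul,
      ite_self, add_zero, zero_add, sub_zero, zero_sub, neg_zero, neg_neg, mul_neg,
      neg_mul, zero_div]
      ring
    · intro k
      rw [hATinner, hA2, hAW, hwphi, hphiV]
      simp only [inner_zero_left, inner_zero_right, inner_neg_left, inner_neg_right, inner_neg_neg,
      inner_add_left, inner_add_right, inner_sub_left, inner_sub_right,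
      real_inner_smul_left, real_inner_smul_right,
      inner_oe_oe, inner_oe_oE, inner_oE_oe, inner_oE_oE, inner_oe_xi, inner_oE_xi,
      inner_oe_zeta, inner_oE_zeta, inner_xi_oe, inner_xi_oE, inner_zeta_oe,
      inner_zeta_oE, inner_xi_xi, inner_zeta_zeta, inner_xi_zeta, inner_zeta_xi,
      ocombo_inner_oe, ocombo_inner_oE, ocombo_inner_xi, ocombo_inner_zeta,
      oe_inner_ocombo, oE_inner_ocombo, xi_inner_ocombo, zeta_inner_ocombo,
      ocombo_inner_ocombo, mul_ite, ite_mul, mul_zero, zero_mul, mul_one, one_mul,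
      ite_self, add_zero, zero_add, sub_zero, zero_sub, neg_zero, neg_neg, mul_neg,
      neg_mul, zero_div]
      ring
    · rw [hATinner, hA3, hAW, hwphi, hphiV]
      simp only [inner_zero_left, inner_zero_right, inner_neg_left, inner_neg_right, inner_neg_neg,
      inner_add_left, inner_add_right, inner_sub_left, inner_sub_right,
      real_inner_smul_left, real_inner_smul_right,
      inner_oe_oe, inner_oe_oE, inner_oE_oe, inner_oE_oE, inner_oe_xi, inner_oE_xi,
      inner_oe_zeta, inner_oE_zeta, inner_xi_oe, inner_xi_oE, inner_zeta_oe,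
      inner_zeta_oE, inner_xi_xi, inner_zeta_zeta, inner_xi_zeta, inner_zeta_xi,
      ocombo_inner_oe, ocombo_inner_oE, ocombo_inner_xi, ocombo_inner_zeta,
      oe_inner_ocombo, oE_inner_ocombo, xi_inner_ocombo, zeta_inner_ocombo,
      ocombo_inner_ocombo, mul_ite, ite_mul, mul_zero, zero_mul, mul_one, one_mul,
      ite_self, add_zero, zero_add, sub_zero, zero_sub, neg_zero, neg_neg, mul_neg,
      neg_mul, zero_div]
    · rw [hATinner, hA4, hAW, hwphi, hphiV]
      simp only [inner_zero_left, inner_zero_right, inner_neg_left, inner_neg_right, inner_neg_neg,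
      inner_add_left, inner_add_right, inner_sub_left, inner_sub_right,
      real_inner_smul_left, real_inner_smul_right,
      inner_oe_oe, inner_oe_oE, inner_oE_oe, inner_oE_oE, inner_oe_xi, inner_oE_xi,
      inner_oe_zeta, inner_oE_zeta, inner_xi_oe, inner_xi_oE, inner_zeta_oe,
      inner_zeta_oE, inner_xi_xi, inner_zeta_zeta, inner_xi_zeta, inner_zeta_xi,
      ocombo_inner_oe, ocombo_inner_oE, ocombo_inner_xi, ocombo_inner_zeta,
      oe_inner_ocombo, oE_inner_ocombo, xi_inner_ocombo, zeta_inner_ocombo,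
      ocombo_inner_ocombo, mul_ite, ite_mul, mul_zero, zero_mul, mul_one, one_mul,
      ite_self, add_zero, zero_add, sub_zero, zero_sub, neg_zero, neg_neg, mul_neg,
      neg_mul, zero_div]
  refine ⟨main1, ?_, ?_, ?_⟩
  · -- xi
    apply osc_eq
    · intro k
      rw [hATinner, hA1, hA3, hT]
      simp only [inner_zero_left, inner_zero_right, inner_neg_left, inner_neg_right, inner_neg_neg,
      inner_add_left, inner_add_right, inner_sub_left, inner_sub_right,
      real_inner_smul_left, real_inner_smul_right,
      inner_oe_oe, inner_oe_oE, inner_oE_oe, inner_oE_oE, inner_oe_xi, inner_oE_xi,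
      inner_oe_zeta, inner_oE_zeta, inner_xi_oe, inner_xi_oE, inner_zeta_oe,
      inner_zeta_oE, inner_xi_xi, inner_zeta_zeta, inner_xi_zeta, inner_zeta_xi,
      ocombo_inner_oe, ocombo_inner_oE, ocombo_inner_xi, ocombo_inner_zeta,
      oe_inner_ocombo, oE_inner_ocombo, xi_inner_ocombo, zeta_inner_ocombo,
      ocombo_inner_ocombo, mul_ite, ite_mul, mul_zero, zero_mul, mul_one, one_mul,
      ite_self, add_zero, zero_add, sub_zero, zero_sub, neg_zero, neg_neg, mul_neg,
      neg_mul, zero_div]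
    · intro k
      rw [hATinner, hA2, hA3, hT]
      simp only [inner_zero_left, inner_zero_right, inner_neg_left, inner_neg_right, inner_neg_neg,
      inner_add_left, inner_add_right, inner_sub_left, inner_sub_right,
      real_inner_smul_left, real_inner_smul_right,
      inner_oe_oe, inner_oe_oE, inner_oE_oe, inner_oE_oE, inner_oe_xi, inner_oE_xi,
      inner_oe_zeta, inner_oE_zeta, inner_xi_oe, inner_xi_oE, inner_zeta_oe,
      inner_zeta_oE, inner_xi_xi, inner_zeta_zeta, inner_xi_zeta, inner_zeta_xi,
      ocombo_inner_oe, ocombo_inner_oE, ocombo_inner_xi, ocombo_inner_zeta,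
      oe_inner_ocombo, oE_inner_ocombo, xi_inner_ocombo, zeta_inner_ocombo,
      ocombo_inner_ocombo, mul_ite, ite_mul, mul_zero, zero_mul, mul_one, one_mul,
      ite_self, add_zero, zero_add, sub_zero, zero_sub, neg_zero, neg_neg, mul_neg,
      neg_mul, zero_div]
    · rw [hATinner, hA3, hT]
      simp only [inner_zero_left, inner_zero_right, inner_neg_left, inner_neg_right, inner_neg_neg,
      inner_add_left, inner_add_right, inner_sub_left, inner_sub_right,
      real_inner_smul_left, real_inner_smul_right,
      inner_oe_oe, inner_oe_oE, inner_oE_oe, inner_oE_oE, inner_oe_xi, inner_oE_xi,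
      inner_oe_zeta, inner_oE_zeta, inner_xi_oe, inner_xi_oE, inner_zeta_oe,
      inner_zeta_oE, inner_xi_xi, inner_zeta_zeta, inner_xi_zeta, inner_zeta_xi,
      ocombo_inner_oe, ocombo_inner_oE, ocombo_inner_xi, ocombo_inner_zeta,
      oe_inner_ocombo, oE_inner_ocombo, xi_inner_ocombo, zeta_inner_ocombo,
      ocombo_inner_ocombo, mul_ite, ite_mul, mul_zero, zero_mul, mul_one, one_mul,
      ite_self, add_zero, zero_add, sub_zero, zero_sub, neg_zero, neg_neg, mul_neg,
      neg_mul, zero_div]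
      have e : (∑ x, (⟪V, oE n x⟫ / 2 * (⟪V, oE n x⟫ / 2) + ⟪V, oe n x⟫ / 2 * (⟪V, oe n x⟫ / 2)))
          = (∑ i, (⟪V, oe n i⟫ * ⟪V, oe n i⟫ + ⟪V, oE n i⟫ * ⟪V, oE n i⟫)) / 4 := by
        rw [Finset.sum_div]
        exact sumext _ _ fun i => by ring
      rw [e, hN]
    · rw [hATinner, hA4, hA3, hT]
      simp only [inner_zero_left, inner_zero_right, inner_neg_left, inner_neg_right, inner_neg_neg,
      inner_add_left, inner_add_right, inner_sub_left, inner_sub_right,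
      real_inner_smul_left, real_inner_smul_right,
      inner_oe_oe, inner_oe_oE, inner_oE_oe, inner_oE_oE, inner_oe_xi, inner_oE_xi,
      inner_oe_zeta, inner_oE_zeta, inner_xi_oe, inner_xi_oE, inner_zeta_oe,
      inner_zeta_oE, inner_xi_xi, inner_zeta_zeta, inner_xi_zeta, inner_zeta_xi,
      ocombo_inner_oe, ocombo_inner_oE, ocombo_inner_xi, ocombo_inner_zeta,
      oe_inner_ocombo, oE_inner_ocombo, xi_inner_ocombo, zeta_inner_ocombo,
      ocombo_inner_ocombo, mul_ite, ite_mul, mul_zero, zero_mul, mul_one, one_mul,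
      ite_self, add_zero, zero_add, sub_zero, zero_sub, neg_zero, neg_neg, mul_neg,
      neg_mul, zero_div]
      have e : (∑ x, (-(⟪V, oE n x⟫ / 2 * (⟪V, oE n x⟫ * lam x)) + -(⟪V, oe n x⟫ / 2 * (⟪V, oe n x⟫ * lam x))))
          = -((∑ i, (⟪V, oe n i⟫ * ⟪V, oe n i⟫ + ⟪V, oE n i⟫ * ⟪V, oE n i⟫) * lam i) / 2) := by
        rw [Finset.sum_div, ← Finset.sum_neg_distrib]
        exact sumext _ _ fun i => by ring
      rw [e]
      ring
  · -- zeta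
    apply osc_eq
    · intro k
      rw [hATinner, hA1, hA4, hT, hU]
      simp only [inner_zero_left, inner_zero_right, inner_neg_left, inner_neg_right, inner_neg_neg,
      inner_add_left, inner_add_right, inner_sub_left, inner_sub_right,
      real_inner_smul_left, real_inner_smul_right,
      inner_oe_oe, inner_oe_oE, inner_oE_oe, inner_oE_oE, inner_oe_xi, inner_oE_xi,
      inner_oe_zeta, inner_oE_zeta, inner_xi_oe, inner_xi_oE, inner_zeta_oe,
      inner_zeta_oE, inner_xi_xi, inner_zeta_zeta, inner_xi_zeta, inner_zeta_xi,
      ocombo_inner_oe, ocombo_inner_oE, ocombo_inner_xi, ocombo_inner_zeta,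
      oe_inner_ocombo, oE_inner_ocombo, xi_inner_ocombo, zeta_inner_ocombo,
      ocombo_inner_ocombo, mul_ite, ite_mul, mul_zero, zero_mul, mul_one, one_mul,
      ite_self, add_zero, zero_add, sub_zero, zero_sub, neg_zero, neg_neg, mul_neg,
      neg_mul, zero_div]
    · intro k
      rw [hATinner, hA2, hA4, hT, hU]
      simp only [inner_zero_left, inner_zero_right, inner_neg_left, inner_neg_right, inner_neg_neg,
      inner_add_left, inner_add_right, inner_sub_left, inner_sub_right,
      real_inner_smul_left, real_inner_smul_right,
      inner_oe_oe, inner_oe_oE, inner_oE_oe, inner_oE_oE, inner_oe_xi, inner_oE_xi,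
      inner_oe_zeta, inner_oE_zeta, inner_xi_oe, inner_xi_oE, inner_zeta_oe,
      inner_zeta_oE, inner_xi_xi, inner_zeta_zeta, inner_xi_zeta, inner_zeta_xi,
      ocombo_inner_oe, ocombo_inner_oE, ocombo_inner_xi, ocombo_inner_zeta,
      oe_inner_ocombo, oE_inner_ocombo, xi_inner_ocombo, zeta_inner_ocombo,
      ocombo_inner_ocombo, mul_ite, ite_mul, mul_zero, zero_mul, mul_one, one_mul,
      ite_self, add_zero, zero_add, sub_zero, zero_sub, neg_zero, neg_neg, mul_neg,
      neg_mul, zero_div]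
    · rw [hATinner, hA3, hA4, hT, hU]
      simp only [inner_zero_left, inner_zero_right, inner_neg_left, inner_neg_right, inner_neg_neg,
      inner_add_left, inner_add_right, inner_sub_left, inner_sub_right,
      real_inner_smul_left, real_inner_smul_right,
      inner_oe_oe, inner_oe_oE, inner_oE_oe, inner_oE_oE, inner_oe_xi, inner_oE_xi,
      inner_oe_zeta, inner_oE_zeta, inner_xi_oe, inner_xi_oE, inner_zeta_oe,
      inner_zeta_oE, inner_xi_xi, inner_zeta_zeta, inner_xi_zeta, inner_zeta_xi,
      ocombo_inner_oe, ocombo_inner_oE, ocombo_inner_xi, ocombo_inner_zeta,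
      oe_inner_ocombo, oE_inner_ocombo, xi_inner_ocombo, zeta_inner_ocombo,
      ocombo_inner_ocombo, mul_ite, ite_mul, mul_zero, zero_mul, mul_one, one_mul,
      ite_self, add_zero, zero_add, sub_zero, zero_sub, neg_zero, neg_neg, mul_neg,
      neg_mul, zero_div]
      have e : (∑ x, (-(⟪V, oE n x⟫ * lam x * (⟪V, oE n x⟫ / 2)) + -(⟪V, oe n x⟫ * lam x * (⟪V, oe n x⟫ / 2))))
          = -((∑ i, (⟪V, oe n i⟫ * ⟪V, oe n i⟫ + ⟪V, oE n i⟫ * ⟪V, oE n i⟫) * lam i) / 2) := by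
        rw [Finset.sum_div, ← Finset.sum_neg_distrib]
        exact sumext _ _ fun i => by ring
      rw [e]
      ring
    · rw [hATinner, hA4, hT, hU]
      simp only [inner_zero_left, inner_zero_right, inner_neg_left, inner_neg_right, inner_neg_neg,
      inner_add_left, inner_add_right, inner_sub_left, inner_sub_right,
      real_inner_smul_left, real_inner_smul_right,
      inner_oe_oe, inner_oe_oE, inner_oE_oe, inner_oE_oE, inner_oe_xi, inner_oE_xi,
      inner_oe_zeta, inner_oE_zeta, inner_xi_oe, inner_xi_oE, inner_zeta_oe,
      inner_zeta_oE, inner_xi_xi, inner_zeta_zeta, inner_xi_zeta, inner_zeta_xi,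
      ocombo_inner_oe, ocombo_inner_oE, ocombo_inner_xi, ocombo_inner_zeta,
      oe_inner_ocombo, oE_inner_ocombo, xi_inner_ocombo, zeta_inner_ocombo,
      ocombo_inner_ocombo, mul_ite, ite_mul, mul_zero, zero_mul, mul_one, one_mul,
      ite_self, add_zero, zero_add, sub_zero, zero_sub, neg_zero, neg_neg, mul_neg,
      neg_mul, zero_div]
      exact sumext _ _ fun i => by ring
  · -- phi V
    have hmem : phi V ∈ Submodule.span ℝ (Set.range (oe n) ∪ Set.range (oE n)) := by
      rw [hphiV]; exact ocombo_mem _ _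
    rw [main1 (phi V) hmem]
    have hpp : ⟪phi V, phi V⟫ = 1 := by
      rw [hphiV, ocombo_inner_ocombo]
      refine Eq.trans (sumext _ _ fun i => by ring) hN
    rw [hpp]
    norm_num
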